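/- Fix 0 < γ1 < 1 and a pursuer position P1 = (x1, y1) ∈ ℝ² with y1 > 0. Then for every evader position E = (x, y) with y > 0, the set {z ∈ ℝ² : dist(z, E) = γ1·dist(z, P1)} meets the x-axis in exactly one point if and only if γ1²x² − (1 − γ1²)y² − 2γ1²x1x + γ1²(x1² + (1 − γ1²)y1²) = 0. In other words, the locus of evader positions in the open upper half-plane for which the E–P1 Apollonius circle is tangent to the goal line is the portion in the open upper half-plane of the hyperbola γ1²x² − (1 − γ1²)y² − 2γ1²x1x + γ1²(x1² + (1 − γ1²)y1²) = 0. -/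

import Mathlib

noncomputable section

/-- The point `(x, y)` in the Euclidean plane `ℝ²`. -/
def pt (x y : ℝ) : EuclideanSpace ℝ (Fin 2) := (WithLp.equiv 2 (Fin 2 → ℝ)).symm ![x, y]

lemma pt_apply0 (a b : ℝ) : pt a b 0 = a := rfl
lemma pt_apply1 (a b : ℝ) : pt a b 1 = b := rfl

lemma pt_ext (z : EuclideanSpace ℝ (Fin 2)) : z = pt (z 0) (z 1) := by
  ext i
  fin_cases i <;> rfl

lemma dist_pt (z : EuclideanSpace ℝ (Fin 2)) (a b : ℝ) :
    dist z (pt a b) = Real.sqrt ((z 0 - a) ^ 2 + (z 1 - b) ^ 2) := by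
  rw [EuclideanSpace.dist_eq, Fin.sum_univ_two]
  simp [Real.dist_eq, sq_abs, pt_apply0, pt_apply1]

lemma quad_unique (a b c : ℝ) (ha : 0 < a) :
    (∃! t : ℝ, a * t ^ 2 + b * t + c = 0) ↔ b ^ 2 - 4 * a * c = 0 := by
  have ha' : a ≠ 0 := ne_of_gt ha
  constructor
  · rintro ⟨t, ht, hu⟩
    have hd : discrim a b c = (2 * a * t + b) ^ 2 :=
      discrim_eq_sq_of_quadratic_eq_zero (by linear_combination ht)
    by_contra h
    have hs : 2 * a * t + b ≠ 0 := by
      intro h0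
      apply h
      rw [h0] at hd
      simpa [discrim] using hd
    have hroot : ∀ u : ℝ, a * u ^ 2 + b * u + c = 0 ↔
        u = (-b + (2 * a * t + b)) / (2 * a) ∨ u = (-b - (2 * a * t + b)) / (2 * a) := by
      intro u
      rw [show a * u ^ 2 + b * u + c = a * (u * u) + b * u + c by ring]
      exact quadratic_eq_zero_iff ha' (by rw [hd]; ring) u
    have h1 := hu _ ((hroot _).mpr (Or.inl rfl))
    have h2 := hu _ ((hroot _).mpr (Or.inr rfl))
    apply hs
    have heq : (-b + (2 * a * t + b)) / (2 * a) = (-b - (2 * a * t + b)) / (2 * a) := by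
      rw [h1, h2]
    field_simp at heq
    linarith
  · intro h
    refine ⟨-b / (2 * a), ?_, ?_⟩
    · field_simp
      ring_nf
      nlinarith
    · intro u hu
      have hd : discrim a b c = (2 * a * u + b) ^ 2 :=
        discrim_eq_sq_of_quadratic_eq_zero (by linear_combination hu)
      have hsq : (2 * a * u + b) ^ 2 = 0 := by
        rw [← hd]; simp only [discrim]; linarith
      have h0 : 2 * a * u + b = 0 := by
        nlinarith [sq_nonneg (2 * a * u + b)]
      field_simp
      linarith

/-- For fixed `0 < γ1 < 1` and pursuer position `P1 = (x1, y1)` with `y1 > 0`, the locus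
of evader positions `(x, y)` in the open upper half-plane for which the `E–P1` Apollonius
circle is tangent to the x-axis (meets it in exactly one point) is the portion in the open
upper half-plane of the hyperbola
`γ1²x² − (1 − γ1²)y² − 2γ1²x1x + γ1²(x1² + (1 − γ1²)y1²) = 0`. -/
theorem tangency_locus_is_hyperbola (γ1 x1 y1 : ℝ)
    (h0 : 0 < γ1) (h1 : γ1 < 1) (hy1 : 0 < y1) :
    ∀ x y : ℝ, 0 < y →
      ((∃! z : EuclideanSpace ℝ (Fin 2),
          dist z (pt x y) = γ1 * dist z (pt x1 y1) ∧ z 1 = 0) ↔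
        γ1 ^ 2 * x ^ 2 - (1 - γ1 ^ 2) * y ^ 2 - 2 * γ1 ^ 2 * x1 * x
          + γ1 ^ 2 * (x1 ^ 2 + (1 - γ1 ^ 2) * y1 ^ 2) = 0) := by
  intro x y hy
  have hγ2 : 0 < 1 - γ1 ^ 2 := by nlinarith
  have key := quad_unique (1 - γ1 ^ 2) (-2 * (x - γ1 ^ 2 * x1))
    (x ^ 2 + y ^ 2 - γ1 ^ 2 * (x1 ^ 2 + y1 ^ 2)) hγ2
  have cond : ∀ t : ℝ, (dist (pt t 0) (pt x y) = γ1 * dist (pt t 0) (pt x1 y1)) ↔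
      (1 - γ1 ^ 2) * t ^ 2 + (-2 * (x - γ1 ^ 2 * x1)) * t
        + (x ^ 2 + y ^ 2 - γ1 ^ 2 * (x1 ^ 2 + y1 ^ 2)) = 0 := by
    intro t
    rw [dist_pt, dist_pt]
    simp only [pt_apply0, pt_apply1]
    have hA : (0:ℝ) ≤ (t - x) ^ 2 + (0 - y) ^ 2 := by positivity
    have hB : (0:ℝ) ≤ (t - x1) ^ 2 + (0 - y1) ^ 2 := by positivity
    constructor
    · intro h
      have hsq := congrArg (· ^ 2) h
      simp only [mul_pow, Real.sq_sqrt hA, Real.sq_sqrt hB] at hsq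
      linear_combination hsq
    · intro h
      have hAB : (t - x) ^ 2 + (0 - y) ^ 2 = γ1 ^ 2 * ((t - x1) ^ 2 + (0 - y1) ^ 2) := by
        linear_combination h
      rw [hAB, Real.sqrt_mul (sq_nonneg γ1), Real.sqrt_sq h0.le]
  constructor
  · rintro ⟨z, ⟨hzd, hz1⟩, hzu⟩
    have hzeq : z = pt (z 0) 0 := by rw [← hz1]; exact pt_ext z
    have hq : ∃! t : ℝ, (1 - γ1 ^ 2) * t ^ 2 + (-2 * (x - γ1 ^ 2 * x1)) * t
        + (x ^ 2 + y ^ 2 - γ1 ^ 2 * (x1 ^ 2 + y1 ^ 2)) = 0 := by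
      refine ⟨z 0, (cond _).mp (by rw [← hzeq]; exact hzd), fun t ht => ?_⟩
      have h2 := hzu (pt t 0) ⟨(cond t).mpr ht, rfl⟩
      calc t = pt t 0 0 := rfl
        _ = z 0 := by rw [h2]
    have hd := key.mp hq
    linear_combination hd / 4
  · intro hhyp
    obtain ⟨t, ht, htu⟩ := key.mpr (by linear_combination 4 * hhyp)
    refine ⟨pt t 0, ⟨(cond t).mpr ht, rfl⟩, ?_⟩
    rintro z ⟨hzd, hz1⟩
    have hzeq : z = pt (z 0) 0 := by rw [← hz1]; exact pt_ext z
    have h2 : z 0 = t := htu _ ((cond _).mp (by rw [← hzeq]; exact hzd))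
    rw [hzeq, h2]
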